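/- The Dirac bracket satisfies the Jacobi identity: for all smooth functions f, g, h, {f,{g,h}^D}^D + {g,{h,f}^D}^D + {h,{f,g}^D}^D = 0. -/

import Mathlib

/-- The Dirac bracket associated to a Poisson bracket `br`, second-class constraints `θ`
and the inverse `Δinv` of the Dirac matrix `Δ α β = br (θ α) (θ β)`:
`{f,g}^D = {f,g} - {f,θ_α} Δ^{αβ} {θ_β,g}`. -/
noncomputable def diracBracket {A : Type*} [CommRing A] {m : ℕ}
    (br : A → A → A) (θ : Fin m → A) (Δinv : Fin m → Fin m → A) (f g : A) : A :=
  br f g - ∑ α, ∑ β, br f (θ α) * Δinv α β * br (θ β) g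

section DiracAux

variable {A : Type*} [CommRing A] {m : ℕ}
variable {br : A → A → A} {θ : Fin m → A} {Δinv : Fin m → Fin m → A}

lemma br_zero_right (hadd : ∀ f g h, br f (g + h) = br f g + br f h) (f : A) :
    br f 0 = 0 := by
  have := hadd f 0 0; simpa using this.symm

lemma br_neg_right (hadd : ∀ f g h, br f (g + h) = br f g + br f h) (f g : A) :
    br f (-g) = - br f g := by
  have h0 := br_zero_right hadd f
  have := hadd f g (-g)
  rw [add_neg_cancel, h0] at this
  linear_combination -this

lemma br_sub_right (hadd : ∀ f g h, br f (g + h) = br f g + br f h) (f g h : A) :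
    br f (g - h) = br f g - br f h := by
  rw [sub_eq_add_neg, hadd, br_neg_right hadd, sub_eq_add_neg]

lemma br_sum_right (hadd : ∀ f g h, br f (g + h) = br f g + br f h)
    {ι : Type*} (s : Finset ι) (f : A) (g : ι → A) :
    br f (∑ i ∈ s, g i) = ∑ i ∈ s, br f (g i) := by
  classical
  induction s using Finset.induction_on with
  | empty => simpa using br_zero_right hadd f
  | insert a s hx ih => rw [Finset.sum_insert hx, hadd, ih, Finset.sum_insert hx]

lemma br_one_right (hleibniz : ∀ f g h, br f (g * h) = br f g * h + g * br f h) (f : A) :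
    br f 1 = 0 := by
  have := hleibniz f 1 1; simpa using this.symm

lemma dinv_antisymm
    (hanti : ∀ f g, br f g = - br g f)
    (hinv_right : ∀ α β, ∑ γ, br (θ α) (θ γ) * Δinv γ β = if α = β then 1 else 0)
    (a b : Fin m) : Δinv b a = - Δinv a b := by
  calc Δinv b a = ∑ p, (if p = b then 1 else 0) * Δinv p a := by simp [ite_mul]
    _ = ∑ p, (∑ q, br (θ p) (θ q) * Δinv q b) * Δinv p a := by
        refine Finset.sum_congr rfl fun p _ => ?_
        rw [hinv_right p b]
    _ = ∑ p, ∑ q, br (θ p) (θ q) * Δinv q b * Δinv p a := by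
        refine Finset.sum_congr rfl fun p _ => ?_
        rw [Finset.sum_mul]
    _ = ∑ q, ∑ p, br (θ p) (θ q) * Δinv q b * Δinv p a := Finset.sum_comm
    _ = ∑ q, -((∑ p, br (θ q) (θ p) * Δinv p a) * Δinv q b) := by
        refine Finset.sum_congr rfl fun q _ => ?_
        rw [Finset.sum_mul, ← Finset.sum_neg_distrib]
        refine Finset.sum_congr rfl fun p _ => ?_
        rw [hanti (θ p) (θ q)]; ring
    _ = ∑ q, -((if q = a then 1 else 0) * Δinv q b) := by
        refine Finset.sum_congr rfl fun q _ => ?_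
        rw [hinv_right q a]
    _ = - Δinv a b := by simp [ite_mul]

lemma dinv_deriv
    (hadd : ∀ f g h, br f (g + h) = br f g + br f h)
    (hleibniz : ∀ f g h, br f (g * h) = br f g * h + g * br f h)
    (hinv_left : ∀ α β, ∑ γ, Δinv α γ * br (θ γ) (θ β) = if α = β then 1 else 0)
    (hinv_right : ∀ α β, ∑ γ, br (θ α) (θ γ) * Δinv γ β = if α = β then 1 else 0)
    (x : A) (a b : Fin m) :
    br x (Δinv a b)
      = -∑ p, ∑ q, Δinv a p * br x (br (θ p) (θ q)) * Δinv q b := by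
  have key2 : ∀ β, ∑ γ, br x (Δinv a γ) * br (θ γ) (θ β)
      = -∑ γ, Δinv a γ * br x (br (θ γ) (θ β)) := by
    intro β
    have h1 : br x (∑ γ, Δinv a γ * br (θ γ) (θ β)) = 0 := by
      rw [hinv_left a β]
      split
      · exact br_one_right hleibniz x
      · exact br_zero_right hadd x
    rw [br_sum_right hadd] at h1
    have h2 : ∑ γ, (br x (Δinv a γ) * br (θ γ) (θ β) + Δinv a γ * br x (br (θ γ) (θ β))) = 0 := by
      rw [← h1]
      exact Finset.sum_congr rfl fun γ _ => (hleibniz x _ _).symm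
    rw [Finset.sum_add_distrib] at h2
    linear_combination h2
  calc br x (Δinv a b) = ∑ γ, br x (Δinv a γ) * (if γ = b then 1 else 0) := by
        simp [mul_ite]
    _ = ∑ γ, br x (Δinv a γ) * (∑ β, br (θ γ) (θ β) * Δinv β b) := by
        refine Finset.sum_congr rfl fun γ _ => ?_
        rw [hinv_right γ b]
    _ = ∑ γ, ∑ β, br x (Δinv a γ) * br (θ γ) (θ β) * Δinv β b := by
        refine Finset.sum_congr rfl fun γ _ => ?_
        rw [Finset.mul_sum]
        exact Finset.sum_congr rfl fun β _ => by ring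
    _ = ∑ β, (∑ γ, br x (Δinv a γ) * br (θ γ) (θ β)) * Δinv β b := by
        rw [Finset.sum_comm]
        exact Finset.sum_congr rfl fun β _ => (Finset.sum_mul _ _ _).symm
    _ = ∑ β, (-∑ γ, Δinv a γ * br x (br (θ γ) (θ β))) * Δinv β b := by
        refine Finset.sum_congr rfl fun β _ => ?_
        rw [key2 β]
    _ = ∑ β, ∑ γ, -(Δinv a γ * br x (br (θ γ) (θ β)) * Δinv β b) := by
        refine Finset.sum_congr rfl fun β _ => ?_
        rw [neg_mul, Finset.sum_mul, ← Finset.sum_neg_distrib]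
    _ = ∑ p, ∑ q, -(Δinv a p * br x (br (θ p) (θ q)) * Δinv q b) := Finset.sum_comm
    _ = -∑ p, ∑ q, Δinv a p * br x (br (θ p) (θ q)) * Δinv q b := by
        rw [← Finset.sum_neg_distrib]
        exact Finset.sum_congr rfl fun p _ => by rw [← Finset.sum_neg_distrib]

lemma sum4_perm {M : Type*} [AddCommMonoid M] {ι : Type*} [Fintype ι]
    (F G : ι → ι → ι → ι → M) (σ τ : ι × ι × ι × ι → ι × ι × ι × ι)
    (h1 : ∀ v, τ (σ v) = v) (h2 : ∀ v, σ (τ v) = v)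
    (hFG : ∀ a b p q, F a b p q
      = G (σ (a,b,p,q)).1 (σ (a,b,p,q)).2.1 (σ (a,b,p,q)).2.2.1 (σ (a,b,p,q)).2.2.2) :
    (∑ a, ∑ b, ∑ p, ∑ q, F a b p q) = ∑ a, ∑ b, ∑ p, ∑ q, G a b p q := by
  classical
  calc (∑ a, ∑ b, ∑ p, ∑ q, F a b p q)
      = ∑ v : ι × ι × ι × ι, F v.1 v.2.1 v.2.2.1 v.2.2.2 := by
        simp only [Fintype.sum_prod_type]
    _ = ∑ v : ι × ι × ι × ι,
        (fun w : ι × ι × ι × ι => G w.1 w.2.1 w.2.2.1 w.2.2.2) (σ v) := by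
        refine Finset.sum_congr rfl fun v _ => ?_
        obtain ⟨a,b,p,q⟩ := v
        exact hFG a b p q
    _ = ∑ v : ι × ι × ι × ι, G v.1 v.2.1 v.2.2.1 v.2.2.2 := by
        have := Equiv.sum_comp (⟨σ, τ, h1, h2⟩ : (ι × ι × ι × ι) ≃ (ι × ι × ι × ι))
          (fun w : ι × ι × ι × ι => G w.1 w.2.1 w.2.2.1 w.2.2.2)
        simpa using this
    _ = ∑ a, ∑ b, ∑ p, ∑ q, G a b p q := by simp only [Fintype.sum_prod_type]

abbrev Tup6 (ι : Type*) := ι × ι × ι × ι × ι × ι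

lemma sum6_perm {M : Type*} [AddCommMonoid M] {ι : Type*} [Fintype ι]
    (F G : ι → ι → ι → ι → ι → ι → M) (σ τ : Tup6 ι → Tup6 ι)
    (h1 : ∀ v, τ (σ v) = v) (h2 : ∀ v, σ (τ v) = v)
    (hFG : ∀ a b p q u v, F a b p q u v
      = G (σ (a,b,p,q,u,v)).1 (σ (a,b,p,q,u,v)).2.1 (σ (a,b,p,q,u,v)).2.2.1
          (σ (a,b,p,q,u,v)).2.2.2.1 (σ (a,b,p,q,u,v)).2.2.2.2.1 (σ (a,b,p,q,u,v)).2.2.2.2.2) :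
    (∑ a, ∑ b, ∑ p, ∑ q, ∑ u, ∑ v, F a b p q u v)
      = ∑ a, ∑ b, ∑ p, ∑ q, ∑ u, ∑ v, G a b p q u v := by
  classical
  calc (∑ a, ∑ b, ∑ p, ∑ q, ∑ u, ∑ v, F a b p q u v)
      = ∑ w : Tup6 ι, F w.1 w.2.1 w.2.2.1 w.2.2.2.1 w.2.2.2.2.1 w.2.2.2.2.2 := by
        simp only [Fintype.sum_prod_type]
    _ = ∑ w : Tup6 ι,
        (fun z : Tup6 ι => G z.1 z.2.1 z.2.2.1 z.2.2.2.1 z.2.2.2.2.1 z.2.2.2.2.2) (σ w) := by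
        refine Finset.sum_congr rfl fun w _ => ?_
        obtain ⟨a,b,p,q,u,v⟩ := w
        exact hFG a b p q u v
    _ = ∑ w : Tup6 ι, G w.1 w.2.1 w.2.2.1 w.2.2.2.1 w.2.2.2.2.1 w.2.2.2.2.2 := by
        have := Equiv.sum_comp (⟨σ, τ, h1, h2⟩ : Tup6 ι ≃ Tup6 ι)
          (fun z : Tup6 ι => G z.1 z.2.1 z.2.2.1 z.2.2.2.1 z.2.2.2.2.1 z.2.2.2.2.2)
        simpa using this
    _ = ∑ a, ∑ b, ∑ p, ∑ q, ∑ u, ∑ v, G a b p q u v := by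
        simp only [Fintype.sum_prod_type]

end DiracAux

section DiracMain

variable {A : Type*} [CommRing A] {m : ℕ}

/-- Type-I terms: double sums with one iterated bracket of fields. -/
def E2T (br : A → A → A) (θ : Fin m → A) (Δinv : Fin m → Fin m → A) (f g h : A) : A :=
  ∑ a, ∑ b, (br f (br g (θ a)) * Δinv a b * br h (θ b)
    + br g (θ a) * Δinv a b * br f (br h (θ b))
    + br f (θ a) * Δinv a b * br g (br h (θ b))
    - br f (θ a) * Δinv a b * br h (br g (θ b)))

/-- `E`-type quadruple sum. -/
def E4a (br : A → A → A) (θ : Fin m → A) (Δinv : Fin m → Fin m → A) (f g h : A) : A :=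
  ∑ a, ∑ b, ∑ p, ∑ q,
    br g (θ a) * Δinv a p * br f (br (θ p) (θ q)) * Δinv q b * br h (θ b)

/-- first `R`-type quadruple sum. -/
def E4b (br : A → A → A) (θ : Fin m → A) (Δinv : Fin m → Fin m → A) (f g h : A) : A :=
  ∑ a, ∑ b, ∑ p, ∑ q,
    br f (θ a) * Δinv a b * br (θ b) (br g (θ p)) * Δinv p q * br h (θ q)

/-- second `R`-type quadruple sum. -/
def E4c (br : A → A → A) (θ : Fin m → A) (Δinv : Fin m → Fin m → A) (f g h : A) : A :=
  ∑ a, ∑ b, ∑ p, ∑ q,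
    br f (θ a) * Δinv a b * br g (θ p) * Δinv p q * br (θ b) (br h (θ q))

/-- `G`-type sextuple sum. -/
def E6T (br : A → A → A) (θ : Fin m → A) (Δinv : Fin m → Fin m → A) (f g h : A) : A :=
  ∑ a, ∑ b, ∑ p, ∑ q, ∑ u, ∑ v,
    br f (θ a) * Δinv a b * br g (θ p) * Δinv p u
      * br (θ b) (br (θ u) (θ v)) * Δinv v q * br h (θ q)

variable {br : A → A → A} {θ : Fin m → A} {Δinv : Fin m → Fin m → A}

lemma pairzero
    (hanti : ∀ f g, br f g = - br g f)
    (hinv_right : ∀ α β, ∑ γ, br (θ α) (θ γ) * Δinv γ β = if α = β then 1 else 0)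
    (x y z : A) :
    (∑ a, ∑ b, br x (br y (θ a)) * Δinv a b * br z (θ b))
      + (∑ a, ∑ b, br z (θ a) * Δinv a b * br x (br y (θ b))) = 0 := by
  have flip : (∑ a, ∑ b, br z (θ a) * Δinv a b * br x (br y (θ b)))
      = ∑ a, ∑ b, br z (θ b) * Δinv b a * br x (br y (θ a)) := Finset.sum_comm
  rw [flip]
  simp only [← Finset.sum_add_distrib]
  refine Finset.sum_eq_zero fun a _ => Finset.sum_eq_zero fun b _ => ?_
  rw [dinv_antisymm hanti hinv_right a b]
  ring

lemma group2
    (hanti : ∀ f g, br f g = - br g f)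
    (hinv_right : ∀ α β, ∑ γ, br (θ α) (θ γ) * Δinv γ β = if α = β then 1 else 0)
    (f g h : A) :
    E2T br θ Δinv f g h + E2T br θ Δinv g h f + E2T br θ Δinv h f g = 0 := by
  have re : E2T br θ Δinv f g h + E2T br θ Δinv g h f + E2T br θ Δinv h f g
      = ((∑ a, ∑ b, br f (br g (θ a)) * Δinv a b * br h (θ b))
          + (∑ a, ∑ b, br h (θ a) * Δinv a b * br f (br g (θ b))))
        + ((∑ a, ∑ b, br g (br h (θ a)) * Δinv a b * br f (θ b))
          + (∑ a, ∑ b, br f (θ a) * Δinv a b * br g (br h (θ b))))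
        + ((∑ a, ∑ b, br h (br f (θ a)) * Δinv a b * br g (θ b))
          + (∑ a, ∑ b, br g (θ a) * Δinv a b * br h (br f (θ b)))) := by
    simp only [E2T, ← Finset.sum_add_distrib]
    refine Finset.sum_congr rfl fun a _ => Finset.sum_congr rfl fun b _ => by ring
  rw [re, pairzero hanti hinv_right f g h, pairzero hanti hinv_right g h f,
    pairzero hanti hinv_right h f g]
  ring

lemma relE
    (hadd : ∀ f g h, br f (g + h) = br f g + br f h)
    (hanti : ∀ f g, br f g = - br g f)
    (hjacobi : ∀ f g h, br f (br g h) + br g (br h f) + br h (br f g) = 0)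
    (x : A) (p q : Fin m) :
    br x (br (θ p) (θ q)) = br (θ p) (br x (θ q)) - br (θ q) (br x (θ p)) := by
  have e1 : br x (br (θ q) (θ p)) = -br x (br (θ p) (θ q)) := by
    rw [hanti (θ q) (θ p), br_neg_right hadd]
  have e2 : br (θ q) (br (θ p) x) = -br (θ q) (br x (θ p)) := by
    rw [hanti (θ p) x, br_neg_right hadd]
  linear_combination (-1 : A) * hjacobi (θ p) x (θ q) + e1 + e2

lemma group4
    (hadd : ∀ f g h, br f (g + h) = br f g + br f h)
    (hanti : ∀ f g, br f g = - br g f)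
    (hjacobi : ∀ f g h, br f (br g h) + br g (br h f) + br h (br f g) = 0)
    (hinv_right : ∀ α β, ∑ γ, br (θ α) (θ γ) * Δinv γ β = if α = β then 1 else 0)
    (x y z : A) :
    E4a br θ Δinv x y z + E4c br θ Δinv y z x + E4b br θ Δinv z x y = 0 := by
  have c1 : E4a br θ Δinv x y z
      = ∑ a, ∑ b, ∑ p, ∑ q,
          -(br y (θ a) * Δinv a p * br z (θ b) * Δinv b q * br x (br (θ p) (θ q))) := by
    unfold E4a
    refine Finset.sum_congr rfl fun a _ => Finset.sum_congr rfl fun b _ =>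
      Finset.sum_congr rfl fun p _ => Finset.sum_congr rfl fun q _ => ?_
    rw [dinv_antisymm hanti hinv_right b q]
    ring
  have c2 : E4c br θ Δinv y z x
      = ∑ a, ∑ b, ∑ p, ∑ q,
          br y (θ a) * Δinv a p * br z (θ b) * Δinv b q * br (θ p) (br x (θ q)) := by
    unfold E4c
    refine sum4_perm _ _ (fun w => (w.1, w.2.2.1, w.2.1, w.2.2.2))
      (fun w => (w.1, w.2.2.1, w.2.1, w.2.2.2)) (fun v => rfl) (fun v => rfl)
      (fun a b p q => by ring)
  have c3 : E4b br θ Δinv z x y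
      = ∑ a, ∑ b, ∑ p, ∑ q,
          -(br y (θ a) * Δinv a p * br z (θ b) * Δinv b q * br (θ q) (br x (θ p))) := by
    unfold E4b
    refine sum4_perm _ _ (fun w => (w.2.2.2, w.1, w.2.2.1, w.2.1))
      (fun w => (w.2.1, w.2.2.2, w.2.2.1, w.1)) (fun v => rfl) (fun v => rfl)
      (fun a b p q => ?_)
    show br z (θ a) * Δinv a b * br (θ b) (br x (θ p)) * Δinv p q * br y (θ q)
      = -(br y (θ q) * Δinv q p * br z (θ a) * Δinv a b * br (θ b) (br x (θ p)))
    rw [dinv_antisymm hanti hinv_right p q]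
    ring
  rw [c1, c2, c3]
  simp only [← Finset.sum_add_distrib]
  refine Finset.sum_eq_zero fun a _ => Finset.sum_eq_zero fun b _ =>
    Finset.sum_eq_zero fun p _ => Finset.sum_eq_zero fun q _ => ?_
  have := relE (θ := θ) hadd hanti hjacobi x p q
  linear_combination (-(br y (θ a) * Δinv a p * br z (θ b) * Δinv b q)) * this

lemma group6
    (hanti : ∀ f g, br f g = - br g f)
    (hjacobi : ∀ f g h, br f (br g h) + br g (br h f) + br h (br f g) = 0)
    (hinv_right : ∀ α β, ∑ γ, br (θ α) (θ γ) * Δinv γ β = if α = β then 1 else 0)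
    (f g h : A) :
    E6T br θ Δinv f g h + E6T br θ Δinv g h f + E6T br θ Δinv h f g = 0 := by
  have c1 : E6T br θ Δinv f g h
      = ∑ a, ∑ b, ∑ p, ∑ q, ∑ u, ∑ v,
          -(br f (θ a) * Δinv a b * br g (θ p) * Δinv p u * br h (θ q) * Δinv q v
            * br (θ b) (br (θ u) (θ v))) := by
    unfold E6T
    refine Finset.sum_congr rfl fun a _ => Finset.sum_congr rfl fun b _ =>
      Finset.sum_congr rfl fun p _ => Finset.sum_congr rfl fun q _ =>
      Finset.sum_congr rfl fun u _ => Finset.sum_congr rfl fun v _ => ?_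
    rw [dinv_antisymm hanti hinv_right q v]
    ring
  have c2 : E6T br θ Δinv g h f
      = ∑ a, ∑ b, ∑ p, ∑ q, ∑ u, ∑ v,
          -(br f (θ a) * Δinv a b * br g (θ p) * Δinv p u * br h (θ q) * Δinv q v
            * br (θ u) (br (θ v) (θ b))) := by
    unfold E6T
    refine sum6_perm _ _
      (fun w => (w.2.2.2.1, w.2.2.2.2.2, w.1, w.2.2.1, w.2.1, w.2.2.2.2.1))
      (fun w => (w.2.2.1, w.2.2.2.2.1, w.2.2.2.1, w.1, w.2.2.2.2.2, w.2.1))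
      (fun w => rfl) (fun w => rfl) (fun a b p q u v => ?_)
    show br g (θ a) * Δinv a b * br h (θ p) * Δinv p u
        * br (θ b) (br (θ u) (θ v)) * Δinv v q * br f (θ q)
      = -(br f (θ q) * Δinv q v * br g (θ a) * Δinv a b * br h (θ p) * Δinv p u
          * br (θ b) (br (θ u) (θ v)))
    rw [dinv_antisymm hanti hinv_right q v]
    ring
  have c3 : E6T br θ Δinv h f g
      = ∑ a, ∑ b, ∑ p, ∑ q, ∑ u, ∑ v,
          -(br f (θ a) * Δinv a b * br g (θ p) * Δinv p u * br h (θ q) * Δinv q v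
            * br (θ v) (br (θ b) (θ u))) := by
    unfold E6T
    refine sum6_perm _ _
      (fun w => (w.2.2.1, w.2.2.2.2.1, w.2.2.2.1, w.1, w.2.2.2.2.2, w.2.1))
      (fun w => (w.2.2.2.1, w.2.2.2.2.2, w.1, w.2.2.1, w.2.1, w.2.2.2.2.1))
      (fun w => rfl) (fun w => rfl) (fun a b p q u v => ?_)
    dsimp only
    rw [dinv_antisymm hanti hinv_right q v]
    ring
  rw [c1, c2, c3]
  simp only [← Finset.sum_add_distrib]
  refine Finset.sum_eq_zero fun a _ => Finset.sum_eq_zero fun b _ =>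
    Finset.sum_eq_zero fun p _ => Finset.sum_eq_zero fun q _ =>
    Finset.sum_eq_zero fun u _ => Finset.sum_eq_zero fun v _ => ?_
  have jac := hjacobi (θ b) (θ u) (θ v)
  linear_combination (-(br f (θ a) * Δinv a b * br g (θ p) * Δinv p u * br h (θ q) * Δinv q v)) * jac

end DiracMain

section DiracExpand

variable {A : Type*} [CommRing A] {m : ℕ}
variable {br : A → A → A} {θ : Fin m → A} {Δinv : Fin m → Fin m → A}

lemma br_M
    (hadd : ∀ f g h, br f (g + h) = br f g + br f h)
    (hanti : ∀ f g, br f g = - br g f)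
    (hleibniz : ∀ f g h, br f (g * h) = br f g * h + g * br f h)
    (hinv_left : ∀ α β, ∑ γ, Δinv α γ * br (θ γ) (θ β) = if α = β then 1 else 0)
    (hinv_right : ∀ α β, ∑ γ, br (θ α) (θ γ) * Δinv γ β = if α = β then 1 else 0)
    (x g h : A) :
    br x (∑ α, ∑ β, br g (θ α) * Δinv α β * br (θ β) h)
      = -(∑ a, ∑ b, br x (br g (θ a)) * Δinv a b * br h (θ b))
        - (∑ a, ∑ b, br g (θ a) * Δinv a b * br x (br h (θ b)))
        + ∑ a, ∑ b, ∑ p, ∑ q,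
            br g (θ a) * Δinv a p * br x (br (θ p) (θ q)) * Δinv q b * br h (θ b) := by
  have point2 : ∀ a b, br x (br g (θ a) * Δinv a b * br (θ b) h)
      = (-(br x (br g (θ a)) * Δinv a b * br h (θ b))
          - br g (θ a) * Δinv a b * br x (br h (θ b)))
        + ∑ p, ∑ q, br g (θ a) * Δinv a p * br x (br (θ p) (θ q)) * Δinv q b * br h (θ b) := by
    intro a b
    have pull : (∑ p, ∑ q, br g (θ a) * Δinv a p * br x (br (θ p) (θ q)) * Δinv q b * br h (θ b))
        = br g (θ a) * ((∑ p, ∑ q, Δinv a p * br x (br (θ p) (θ q)) * Δinv q b) * br h (θ b)) := by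
      simp only [Finset.mul_sum, Finset.sum_mul]
      exact Finset.sum_congr rfl fun p _ => Finset.sum_congr rfl fun q _ => by ring
    rw [pull, hanti (θ b) h, hleibniz x (br g (θ a) * Δinv a b) (-(br h (θ b))),
      hleibniz x (br g (θ a)) (Δinv a b), br_neg_right hadd,
      dinv_deriv hadd hleibniz hinv_left hinv_right x a b]
    ring
  have step : ∀ a : Fin m, br x (∑ β, br g (θ a) * Δinv a β * br (θ β) h)
      = ∑ b, ((-(br x (br g (θ a)) * Δinv a b * br h (θ b))
          - br g (θ a) * Δinv a b * br x (br h (θ b)))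
        + ∑ p, ∑ q, br g (θ a) * Δinv a p * br x (br (θ p) (θ q)) * Δinv q b * br h (θ b)) := by
    intro a
    rw [br_sum_right hadd]
    exact Finset.sum_congr rfl fun b _ => point2 a b
  rw [br_sum_right hadd]
  simp only [step]
  simp only [Finset.sum_add_distrib, Finset.sum_sub_distrib, Finset.sum_neg_distrib]

lemma expand
    (hadd : ∀ f g h, br f (g + h) = br f g + br f h)
    (hanti : ∀ f g, br f g = - br g f)
    (hleibniz : ∀ f g h, br f (g * h) = br f g * h + g * br f h)
    (hjacobi : ∀ f g h, br f (br g h) + br g (br h f) + br h (br f g) = 0)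
    (hinv_left : ∀ α β, ∑ γ, Δinv α γ * br (θ γ) (θ β) = if α = β then 1 else 0)
    (hinv_right : ∀ α β, ∑ γ, br (θ α) (θ γ) * Δinv γ β = if α = β then 1 else 0)
    (f g h : A) :
    diracBracket br θ Δinv f (diracBracket br θ Δinv g h)
      = br f (br g h) + E2T br θ Δinv f g h
        - E4a br θ Δinv f g h - E4b br θ Δinv f g h - E4c br θ Δinv f g h
        + E6T br θ Δinv f g h := by
  have jac3 : ∀ b : Fin m, br (θ b) (br g h)
      = -(br g (br h (θ b))) + br h (br g (θ b)) := by
    intro b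
    have e : br h (br (θ b) g) = -br h (br g (θ b)) := by
      rw [hanti (θ b) g, br_neg_right hadd]
    linear_combination hjacobi (θ b) g h - e
  have inner : ∀ a b : Fin m,
      br f (θ a) * Δinv a b
          * br (θ b) (br g h - ∑ α, ∑ β, br g (θ α) * Δinv α β * br (θ β) h)
      = (-(br f (θ a) * Δinv a b * br g (br h (θ b)))
          + br f (θ a) * Δinv a b * br h (br g (θ b)))
        + (∑ p, ∑ q, br f (θ a) * Δinv a b * br (θ b) (br g (θ p)) * Δinv p q * br h (θ q))
        + (∑ p, ∑ q, br f (θ a) * Δinv a b * br g (θ p) * Δinv p q * br (θ b) (br h (θ q)))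
        - (∑ p, ∑ q, ∑ u, ∑ v, br f (θ a) * Δinv a b * br g (θ p) * Δinv p u
            * br (θ b) (br (θ u) (θ v)) * Δinv v q * br h (θ q)) := by
    intro a b
    have pull1 : (∑ p, ∑ q, br f (θ a) * Δinv a b * br (θ b) (br g (θ p)) * Δinv p q * br h (θ q))
        = br f (θ a) * Δinv a b
            * ∑ p, ∑ q, br (θ b) (br g (θ p)) * Δinv p q * br h (θ q) := by
      simp only [Finset.mul_sum]
      exact Finset.sum_congr rfl fun p _ => Finset.sum_congr rfl fun q _ => by ring
    have pull2 : (∑ p, ∑ q, br f (θ a) * Δinv a b * br g (θ p) * Δinv p q * br (θ b) (br h (θ q)))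
        = br f (θ a) * Δinv a b
            * ∑ p, ∑ q, br g (θ p) * Δinv p q * br (θ b) (br h (θ q)) := by
      simp only [Finset.mul_sum]
      exact Finset.sum_congr rfl fun p _ => Finset.sum_congr rfl fun q _ => by ring
    have pull3 : (∑ p, ∑ q, ∑ u, ∑ v, br f (θ a) * Δinv a b * br g (θ p) * Δinv p u
            * br (θ b) (br (θ u) (θ v)) * Δinv v q * br h (θ q))
        = br f (θ a) * Δinv a b
            * ∑ p, ∑ q, ∑ u, ∑ v, br g (θ p) * Δinv p u
                * br (θ b) (br (θ u) (θ v)) * Δinv v q * br h (θ q) := by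
      simp only [Finset.mul_sum]
      exact Finset.sum_congr rfl fun p _ => Finset.sum_congr rfl fun q _ =>
        Finset.sum_congr rfl fun u _ => Finset.sum_congr rfl fun v _ => by ring
    rw [pull1, pull2, pull3, br_sub_right hadd, jac3 b,
      br_M hadd hanti hleibniz hinv_left hinv_right (θ b) g h]
    ring
  have main : (∑ α, ∑ β, br f (θ α) * Δinv α β
        * br (θ β) (br g h - ∑ α, ∑ β, br g (θ α) * Δinv α β * br (θ β) h))
      = ∑ a, ∑ b, ((-(br f (θ a) * Δinv a b * br g (br h (θ b)))
          + br f (θ a) * Δinv a b * br h (br g (θ b)))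
        + (∑ p, ∑ q, br f (θ a) * Δinv a b * br (θ b) (br g (θ p)) * Δinv p q * br h (θ q))
        + (∑ p, ∑ q, br f (θ a) * Δinv a b * br g (θ p) * Δinv p q * br (θ b) (br h (θ q)))
        - (∑ p, ∑ q, ∑ u, ∑ v, br f (θ a) * Δinv a b * br g (θ p) * Δinv p u
            * br (θ b) (br (θ u) (θ v)) * Δinv v q * br h (θ q))) :=
    Finset.sum_congr rfl fun a _ => Finset.sum_congr rfl fun b _ => inner a b
  simp only [diracBracket]
  rw [br_sub_right hadd, br_M hadd hanti hleibniz hinv_left hinv_right f g h, main]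
  simp only [Finset.sum_add_distrib, Finset.sum_sub_distrib, Finset.sum_neg_distrib]
  simp only [E2T, E4a, E4b, E4c, E6T, Finset.sum_add_distrib, Finset.sum_sub_distrib,
    Finset.sum_neg_distrib]
  ring

end DiracExpand

/-- The Dirac bracket satisfies the Jacobi identity:
`{f,{g,h}^D}^D + {g,{h,f}^D}^D + {h,{f,g}^D}^D = 0`. -/
theorem dirac_bracket_jacobi {A : Type*} [CommRing A] {m : ℕ}
    (br : A → A → A)
    (hadd : ∀ f g h, br f (g + h) = br f g + br f h)
    (hanti : ∀ f g, br f g = - br g f)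
    (hleibniz : ∀ f g h, br f (g * h) = br f g * h + g * br f h)
    (hjacobi : ∀ f g h, br f (br g h) + br g (br h f) + br h (br f g) = 0)
    (θ : Fin m → A) (Δinv : Fin m → Fin m → A)
    (hinv_left : ∀ α β, ∑ γ, Δinv α γ * br (θ γ) (θ β) = if α = β then 1 else 0)
    (hinv_right : ∀ α β, ∑ γ, br (θ α) (θ γ) * Δinv γ β = if α = β then 1 else 0) :
    ∀ f g h,
      diracBracket br θ Δinv f (diracBracket br θ Δinv g h)
        + diracBracket br θ Δinv g (diracBracket br θ Δinv h f)
        + diracBracket br θ Δinv h (diracBracket br θ Δinv f g) = 0 := by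
  intro f g h
  rw [expand hadd hanti hleibniz hjacobi hinv_left hinv_right f g h,
    expand hadd hanti hleibniz hjacobi hinv_left hinv_right g h f,
    expand hadd hanti hleibniz hjacobi hinv_left hinv_right h f g]
  linear_combination hjacobi f g h + group2 hanti hinv_right f g h
    - group4 hadd hanti hjacobi hinv_right f g h
    - group4 hadd hanti hjacobi hinv_right g h f
    - group4 hadd hanti hjacobi hinv_right h f g
    + group6 hanti hjacobi hinv_right f g h
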